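/- Ellenberg–Venkatesh–Westerland periodicity of component counts: Let G be a finite group and c ⊆ G a conjugacy class whose elements generate G, satisfying the non-splitting property. For r ≥ 1 let N(r) be the number of braid orbits of the Hurwitz action of B_r on the set c^r of all tuples of length r with entries in c. Then there exist a positive integer u and an integer R such that N(r + u) = N(r) for every r ≥ R: the number of components of the Hurwitz spaces Hur_{r,G}(c^r) becomes u-periodic as r gets suitably large. -/

import Mathlib

/-- The elementary braid move `Q_i`: `w` is obtained from `v` by replacing
`(…, g_i, g_{i+1}, …)` with `(…, g_i g_{i+1} g_i⁻¹, g_i, …)`. -/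
def BraidStep {G : Type*} [Group G] {r : ℕ} (v w : Fin r → G) : Prop :=
  ∃ i : ℕ, ∃ h : i + 1 < r,
    w ⟨i, Nat.lt_of_succ_lt h⟩ =
      v ⟨i, Nat.lt_of_succ_lt h⟩ * v ⟨i + 1, h⟩ * (v ⟨i, Nat.lt_of_succ_lt h⟩)⁻¹ ∧
    w ⟨i + 1, h⟩ = v ⟨i, Nat.lt_of_succ_lt h⟩ ∧
    ∀ j : Fin r, j.val ≠ i → j.val ≠ i + 1 → w j = v j

/-- Two tuples are braid-equivalent if they are related by the equivalence relation
generated by the elementary braid moves and their inverses (the Hurwitz action of `B_r`). -/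
def BraidEquiv {G : Type*} [Group G] {r : ℕ} (v w : Fin r → G) : Prop :=
  Relation.EqvGen BraidStep v w
/-- The number of braid orbits of the Hurwitz action of `B_r` on the set `c^r` of all
`r`-tuples with entries in `c`. -/
noncomputable def numBraidOrbits (G : Type*) [Group G] (c : Set G) (r : ℕ) : ℕ :=
  Nat.card (Quot (fun v w : {v : Fin r → G // ∀ i, v i ∈ c} => BraidEquiv v.1 w.1))

namespace EVWAux

variable {G : Type*} [Group G]

/-- Braid move on lists. -/
def LStep (l l' : List G) : Prop :=
  ∃ p a b s, l = p ++ a :: b :: s ∧ l' = p ++ (a * b * a⁻¹) :: a :: s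

/-- Braid equivalence on lists. -/
def LEq : List G → List G → Prop := Relation.EqvGen LStep

theorem LEq.refl (l : List G) : LEq l l := Relation.EqvGen.refl l
theorem LEq.symm {l l' : List G} (h : LEq l l') : LEq l' l := Relation.EqvGen.symm _ _ h
theorem LEq.trans {a b c : List G} (h : LEq a b) (h' : LEq b c) : LEq a c :=
  Relation.EqvGen.trans _ _ _ h h'
theorem LEq.of_step {l l' : List G} (h : LStep l l') : LEq l l' := Relation.EqvGen.rel _ _ h

theorem LStep.length_eq {l l' : List G} (h : LStep l l') : l.length = l'.length := by
  obtain ⟨p, a, b, s, rfl, rfl⟩ := h; simp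

theorem LEq.length_eq {l l' : List G} (h : LEq l l') : l.length = l'.length := by
  induction h with
  | rel _ _ h => exact h.length_eq
  | refl => rfl
  | symm _ _ _ ih => omega
  | trans _ _ _ _ _ ih1 ih2 => omega

theorem LStep.append_left {l l' : List G} (p : List G) (h : LStep l l') :
    LStep (p ++ l) (p ++ l') := by
  obtain ⟨q, a, b, s, rfl, rfl⟩ := h
  exact ⟨p ++ q, a, b, s, by simp, by simp⟩

theorem LStep.append_right {l l' : List G} (s : List G) (h : LStep l l') :
    LStep (l ++ s) (l' ++ s) := by
  obtain ⟨q, a, b, t, rfl, rfl⟩ := h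
  exact ⟨q, a, b, t ++ s, by simp, by simp⟩

theorem LEq.append_left {l l' : List G} (p : List G) (h : LEq l l') :
    LEq (p ++ l) (p ++ l') := by
  induction h with
  | rel _ _ h => exact .of_step (h.append_left p)
  | refl => exact .refl _
  | symm _ _ _ ih => exact ih.symm
  | trans _ _ _ _ _ ih1 ih2 => exact ih1.trans ih2

theorem LEq.append_right {l l' : List G} (s : List G) (h : LEq l l') :
    LEq (l ++ s) (l' ++ s) := by
  induction h with
  | rel _ _ h => exact .of_step (h.append_right s)
  | refl => exact .refl _
  | symm _ _ _ ih => exact ih.symm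
  | trans _ _ _ _ _ ih1 ih2 => exact ih1.trans ih2

theorem LEq.append {a a' b b' : List G} (h : LEq a a') (h' : LEq b b') :
    LEq (a ++ b) (a' ++ b') := (h.append_right b).trans (h'.append_left a')

/-- Push an element rightwards through a list, conjugating what it passes. -/
theorem leq_push (x : G) (B : List G) :
    LEq (x :: B) (B.map (fun b => x * b * x⁻¹) ++ [x]) := by
  induction B with
  | nil => exact .refl _
  | cons b B ih =>
    have h1 : LStep (x :: b :: B) ((x * b * x⁻¹) :: x :: B) := ⟨[], x, b, B, rfl, rfl⟩
    refine (LEq.of_step h1).trans ?_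
    have := ih.append_left [x * b * x⁻¹]
    simpa using this

/-- Move a block to the left past a list; the list gets conjugated by the block's product. -/
theorem leq_block_comm (B m : List G) :
    LEq (B ++ m) (m.map (fun y => B.prod * y * B.prod⁻¹) ++ B) := by
  induction B using List.reverseRecOn generalizing m with
  | nil => simp [LEq.refl]
  | append_singleton B a ih =>
    have h1 : LEq ((B ++ [a]) ++ m) (B ++ (m.map (fun b => a * b * a⁻¹) ++ [a])) := by
      have := (leq_push a m).append_left B
      simpa using this
    refine h1.trans ?_
    have h2 := (ih (m.map (fun b => a * b * a⁻¹))).append_right [a]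
    have h3 : LEq (B ++ (m.map (fun b => a * b * a⁻¹) ++ [a]))
        ((B ++ m.map fun b => a * b * a⁻¹) ++ [a]) := by
      rw [List.append_assoc]; exact .refl _
    refine (h3.trans h2).trans ?_
    rw [List.map_map, List.append_assoc]
    have he : ((fun y => B.prod * y * B.prod⁻¹) ∘ fun b => a * b * a⁻¹) =
        (fun y => (B ++ [a]).prod * y * ((B ++ [a]).prod)⁻¹) := by
      funext y; simp [mul_assoc]
    rw [he]
    exact .refl _

theorem leq_comm_of_prod_one {B : List G} (h : B.prod = 1) (m : List G) :
    LEq (B ++ m) (m ++ B) := by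
  have := leq_block_comm B m
  simpa [h] using this


/-- Pull an element leftwards through a block. -/
theorem leq_pull (x : G) (B : List G) :
    LEq (B ++ [x]) (x :: B.map (fun b => x⁻¹ * b * x)) := by
  have := leq_push x (B.map (fun b => x⁻¹ * b * x))
  rw [List.map_map] at this
  have he : ((fun b => x * b * x⁻¹) ∘ fun b => x⁻¹ * b * x) = id := by
    funext y; simp [mul_assoc]
  rw [he, List.map_id] at this
  exact this.symm

/-- Conjugate a trivial-product block sitting at the end by an entry `u` of `Y`,
leaving `Y` unchanged. -/
theorem conj_block {Y : List G} {u : G} (hu : u ∈ Y) {b : G} {k : ℕ} (hb : b ^ k = 1) :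
    LEq (Y ++ List.replicate k b) (Y ++ List.replicate k (u * b * u⁻¹)) := by
  obtain ⟨p, s, rfl⟩ := List.append_of_mem hu
  have hW : (List.replicate k b).prod = 1 := by simp [hb]
  have hW' : (List.replicate k (u * b * u⁻¹)).prod = 1 := by
    simp only [List.prod_replicate]
    rw [conj_pow]; simp [hb]
  -- p ++ u :: (s ++ W) ~ p ++ u :: (W ++ s)
  have h1 : LEq ((p ++ u :: s) ++ List.replicate k b)
      (p ++ u :: (List.replicate k b ++ s)) := by
    have := (leq_comm_of_prod_one hW s).symm.append_left (p ++ [u])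
    simpa using this
  -- u :: (W ++ s) : push u right through W : map gives W' ++ [u] ++ s
  have h2 : LEq (p ++ u :: (List.replicate k b ++ s))
      (p ++ ((List.replicate k (u * b * u⁻¹)) ++ (u :: s))) := by
    apply LEq.append_left
    have hp := (leq_push u (List.replicate k b)).append_right s
    simp only [List.map_replicate] at hp
    simpa using hp
  -- W' ++ (u :: s) ~ (u :: s) ++ W'
  have h3 : LEq (p ++ ((List.replicate k (u * b * u⁻¹)) ++ (u :: s)))
      (p ++ ((u :: s) ++ List.replicate k (u * b * u⁻¹))) :=
    (leq_comm_of_prod_one hW' (u :: s)).append_left p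
  refine (h1.trans (h2.trans h3)).trans ?_
  simp [LEq.refl]

theorem conj_block_inv {Y : List G} {u : G} (hu : u ∈ Y) {b : G} {k : ℕ} (hb : b ^ k = 1) :
    LEq (Y ++ List.replicate k b) (Y ++ List.replicate k (u⁻¹ * b * u)) := by
  obtain ⟨p, s, rfl⟩ := List.append_of_mem hu
  have hW : (List.replicate k b).prod = 1 := by simp [hb]
  have hW' : (List.replicate k (u⁻¹ * b * u)).prod = 1 := by
    simp only [List.prod_replicate]
    have : u⁻¹ * b * u = u⁻¹ * b * u⁻¹⁻¹ := by simp
    rw [this, conj_pow]; simp [hb]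
  have h1 : LEq ((p ++ u :: s) ++ List.replicate k b)
      (p ++ (([u] ++ List.replicate k b) ++ s)) := by
    have := (leq_comm_of_prod_one hW s).symm.append_left (p ++ [u])
    simpa using this
  have h2 : LEq (p ++ (([u] ++ List.replicate k b) ++ s))
      (p ++ ((List.replicate k b ++ [u]) ++ s)) := by
    apply LEq.append_left; apply LEq.append_right
    exact (leq_comm_of_prod_one hW [u]).symm
  have h3 : LEq (p ++ ((List.replicate k b ++ [u]) ++ s))
      (p ++ ((u :: List.replicate k (u⁻¹ * b * u)) ++ s)) := by
    apply LEq.append_left; apply LEq.append_right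
    have := leq_pull u (List.replicate k b)
    simpa [List.map_replicate] using this
  have h4 : LEq (p ++ ((u :: List.replicate k (u⁻¹ * b * u)) ++ s))
      ((p ++ u :: s) ++ List.replicate k (u⁻¹ * b * u)) := by
    have := (leq_comm_of_prod_one hW' s).append_left (p ++ [u])
    simpa using this
  exact ((h1.trans h2).trans h3).trans h4

/-- Values reachable from `a` by iterated conjugation by elements of `T` and inverses. -/
inductive Reach (T : Set G) (a : G) : G → Prop
  | base : Reach T a a
  | conj (u x : G) : u ∈ T → Reach T a x → Reach T a (u * x * u⁻¹)
  | conj_inv (u x : G) : u ∈ T → Reach T a x → Reach T a (u⁻¹ * x * u)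

theorem reach_of_mem_closure {T : Set G} {a h : G} (hh : h ∈ Subgroup.closure T)
    {x : G} (hx : Reach T a x) : Reach T a (h * x * h⁻¹) := by
  let K : Subgroup G :=
    { carrier := {h : G | ∀ x : G, Reach T a x ↔ Reach T a (h * x * h⁻¹)}
      one_mem' := by intro x; simp
      mul_mem' := by
        intro g h hg hh x
        constructor
        · intro hx
          have := (hh x).mp hx
          have := (hg _).mp this
          simpa [mul_assoc] using this
        · intro hx
          have h1 : g * h * x * (g * h)⁻¹ = g * (h * x * h⁻¹) * g⁻¹ := by
            simp [mul_assoc]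
          rw [h1] at hx
          exact (hh x).mpr ((hg _).mpr hx)
      inv_mem' := by
        intro g hg x
        constructor
        · intro hx
          have h2 : Reach T a (g * (g⁻¹ * x * g) * g⁻¹) := by
            have hxx : g * (g⁻¹ * x * g) * g⁻¹ = x := by group
            rw [hxx]; exact hx
          have h3 := (hg (g⁻¹ * x * g)).mpr h2
          rw [inv_inv]
          exact h3
        · intro hx
          rw [inv_inv] at hx
          have h3 := (hg (g⁻¹ * x * g)).mp hx
          have hxx : g * (g⁻¹ * x * g) * g⁻¹ = x := by group
          rw [hxx] at h3
          exact h3 }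
  have hT : T ⊆ K := by
    intro u hu x
    constructor
    · exact Reach.conj u x hu
    · intro hx
      have := Reach.conj_inv u _ hu hx
      simpa [mul_assoc] using this
  have : h ∈ K := Subgroup.closure_le K |>.mpr hT hh
  exact (this x).mp hx

variable [Finite G]

theorem e_pos : 0 < Nat.card G := Nat.card_pos

/-- Convert a trivial-product block at the end to any reachable value. -/
theorem block_reach {T : Set G} {a : G} {Y : List G} (hTY : T ⊆ {x | x ∈ Y})
    {t : G} (ht : Reach T a t) :
    LEq (Y ++ List.replicate (Nat.card G) a) (Y ++ List.replicate (Nat.card G) t) := by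
  induction ht with
  | base => exact .refl _
  | conj u x hu _ ih => exact ih.trans (conj_block (hTY hu) (pow_card_eq_one' (G := G)))
  | conj_inv u x hu _ ih => exact ih.trans (conj_block_inv (hTY hu) (pow_card_eq_one' (G := G)))

/-- Build blocks for each target value out of a long run of `a`'s. -/
theorem build {T : Set G} {a : G} (ts : List G) (hts : ∀ t ∈ ts, Reach T a t) :
    ∀ Y : List G, T ⊆ {x | x ∈ Y} →
      LEq (Y ++ List.replicate (Nat.card G * ts.length) a)
        (Y ++ (ts.map (fun t => List.replicate (Nat.card G) t)).flatten) := by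
  induction ts with
  | nil => intro Y _; simp [LEq.refl]
  | cons t ts ih =>
    intro Y hTY
    have hsplit : List.replicate (Nat.card G * (t :: ts).length) a
        = List.replicate (Nat.card G * ts.length) a ++ List.replicate (Nat.card G) a := by
      rw [show Nat.card G * (t :: ts).length = Nat.card G * ts.length + Nat.card G by
        simp [Nat.mul_succ], ← List.replicate_add]
    rw [hsplit]
    have h1 : LEq ((Y ++ List.replicate (Nat.card G * ts.length) a) ++ List.replicate (Nat.card G) a)
        ((Y ++ List.replicate (Nat.card G * ts.length) a) ++ List.replicate (Nat.card G) t) := by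
      apply block_reach (T := T) (a := a) ?_ (hts t (by simp))
      intro x hx
      simp only [Set.mem_setOf_eq, List.mem_append]
      exact Or.inl (hTY hx)
    have h2 : LEq (Y ++ (List.replicate (Nat.card G * ts.length) a ++ List.replicate (Nat.card G) t))
        (Y ++ (List.replicate (Nat.card G) t ++ List.replicate (Nat.card G * ts.length) a)) := by
      apply LEq.append_left
      exact leq_comm_of_prod_one (by simp [List.prod_replicate, pow_mul, pow_card_eq_one']) _
    have h3 : LEq ((Y ++ List.replicate (Nat.card G) t) ++ List.replicate (Nat.card G * ts.length) a)
        ((Y ++ List.replicate (Nat.card G) t) ++ (ts.map (fun t => List.replicate (Nat.card G) t)).flatten) := by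
      apply ih (fun t ht => hts t (by simp [ht]))
      intro x hx
      simp only [Set.mem_setOf_eq, List.mem_append]
      exact Or.inl (hTY hx)
    have := (LEq.trans (by simpa using h1) (h2.trans (by simpa using h3)))
    refine (by simpa using this : LEq _ _).trans ?_
    simp [LEq.refl]

omit [Finite G] in
/-- Gather `k` copies of `a` at the end of the list. -/
theorem gather [DecidableEq G] (a : G) : ∀ (k : ℕ) (l : List G), k ≤ l.count a →
    ∃ y : List G, LEq l (y ++ List.replicate k a) := by
  intro k
  induction k with
  | zero => intro l _; exact ⟨l, by simp [LEq.refl]⟩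
  | succ k ih =>
    intro l hk
    have hmem : a ∈ l := by
      by_contra hm
      simp [List.count_eq_zero_of_not_mem hm] at hk
    obtain ⟨p, s, rfl⟩ := List.append_of_mem hmem
    have h1 : LEq (p ++ a :: s) ((p ++ s.map (fun b => a * b * a⁻¹)) ++ [a]) := by
      have := (leq_push a s).append_left p
      simpa using this
    have hcount : k ≤ (p ++ s.map (fun b => a * b * a⁻¹)).count a := by
      have hinj : Function.Injective (fun b : G => a * b * a⁻¹) := by
        intro x y h
        simpa using h
      have h2 : (s.map (fun b => a * b * a⁻¹)).count a = s.count a := by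
        have := List.count_map_of_injective (x := a) s (fun b : G => a * b * a⁻¹) hinj
        simpa using this
      have h3 : (p ++ a :: s).count a = p.count a + (s.count a + 1) := by
        simp [List.count_append, List.count_cons]
      rw [List.count_append, h2]
      omega
    obtain ⟨y, hy⟩ := ih _ hcount
    refine ⟨y, h1.trans ?_⟩
    have h4 := hy.append_right [a]
    rw [List.replicate_succ' (n := k) (a := a), ← List.append_assoc]
    exact h4

/-- Pigeonhole: a long list over a finite type has a repeated entry. -/
theorem exists_high_count [DecidableEq G] (l : List G) (k : ℕ)
    (hl : Nat.card G * k < l.length) :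
    ∃ a : G, k ≤ l.count a := by
  by_contra hc
  push_neg at hc
  have hle : ∀ a ∈ l.toFinset, l.count a ≤ k - 1 := by
    intro a _
    have := hc a
    omega
  have hlen : l.length ≤ l.toFinset.card * (k - 1) := by
    have hsum : ∑ a ∈ l.toFinset, l.count a = l.length := by
      have := Multiset.toFinset_sum_count_eq (l : Multiset G)
      simpa using this
    rw [← hsum]
    calc ∑ a ∈ l.toFinset, l.count a ≤ ∑ _a ∈ l.toFinset, (k - 1) :=
          Finset.sum_le_sum hle
      _ = l.toFinset.card * (k - 1) := by simp [Finset.sum_const]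
  letI : Fintype G := Fintype.ofFinite G
  have hcard : l.toFinset.card ≤ Nat.card G := by
    rw [Nat.card_eq_fintype_card]
    exact Finset.card_le_univ _
  have h1 : l.length ≤ Nat.card G * (k - 1) :=
    le_trans hlen (Nat.mul_le_mul_right _ hcard)
  have h2 : Nat.card G * (k - 1) ≤ Nat.card G * k := Nat.mul_le_mul_left _ (by omega)
  omega

omit [Finite G] in
/-- Braid equivalence preserves having all entries in a conjugation-closed set. -/
theorem leq_mem_iff {S : Set G} (hS : ∀ g x : G, x ∈ S → g * x * g⁻¹ ∈ S)
    {l l' : List G} (h : LEq l l') : (∀ x ∈ l, x ∈ S) ↔ (∀ x ∈ l', x ∈ S) := by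
  induction h with
  | rel x y hxy =>
    obtain ⟨p, a, b, s, rfl, rfl⟩ := hxy
    constructor
    · intro hmem z hz
      rw [List.mem_append, List.mem_cons, List.mem_cons] at hz
      rcases hz with hz | hz | hz | hz
      · exact hmem z (by simp [hz])
      · rw [hz]
        exact hS a b (hmem b (by simp))
      · rw [hz]
        exact hmem a (by simp)
      · exact hmem z (by simp [hz])
    · intro hmem z hz
      rw [List.mem_append, List.mem_cons, List.mem_cons] at hz
      rcases hz with hz | hz | hz | hz
      · exact hmem z (by simp [hz])
      · rw [hz]
        have := hmem a (by simp)
        exact this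
      · rw [hz]
        have hb : a * b * a⁻¹ ∈ S := hmem _ (by simp)
        have h2 := hS a⁻¹ _ hb
        have he : a⁻¹ * (a * b * a⁻¹) * a⁻¹⁻¹ = b := by group
        rwa [he] at h2
      · exact hmem z (by simp [hz])
  | refl => exact Iff.rfl
  | symm _ _ _ ih => exact ih.symm
  | trans _ _ _ _ _ ih1 ih2 => exact ih1.trans ih2

omit [Finite G] in
/-- Braid equivalence preserves the subgroup generated by the entries. -/
theorem leq_closure_eq {l l' : List G} (h : LEq l l') :
    Subgroup.closure {x | x ∈ l} = Subgroup.closure {x | x ∈ l'} := by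
  induction h with
  | rel x y hxy =>
    obtain ⟨p, a, b, s, rfl, rfl⟩ := hxy
    apply le_antisymm
    · rw [Subgroup.closure_le]
      intro z hz
      have hmem : ∀ w ∈ (p ++ (a * b * a⁻¹) :: a :: s),
          w ∈ Subgroup.closure {x | x ∈ p ++ (a * b * a⁻¹) :: a :: s} :=
        fun w hw => Subgroup.subset_closure hw
      simp only [Set.mem_setOf_eq] at hz
      rw [List.mem_append, List.mem_cons, List.mem_cons] at hz
      rcases hz with hz | hz | hz | hz
      · exact hmem z (by simp [hz])
      · rw [hz]
        exact hmem a (by simp)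
      · rw [hz]
        have h1 := hmem (a * b * a⁻¹) (by simp)
        have h2 := hmem a (by simp)
        have h3 := mul_mem (mul_mem (inv_mem h2) h1) h2
        have he : a⁻¹ * (a * b * a⁻¹) * a = b := by group
        rwa [he] at h3
      · exact hmem z (by simp [hz])
    · rw [Subgroup.closure_le]
      intro z hz
      have hmem : ∀ w ∈ (p ++ a :: b :: s),
          w ∈ Subgroup.closure {x | x ∈ p ++ a :: b :: s} :=
        fun w hw => Subgroup.subset_closure hw
      simp only [Set.mem_setOf_eq] at hz
      rw [List.mem_append, List.mem_cons, List.mem_cons] at hz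
      rcases hz with hz | hz | hz | hz
      · exact hmem z (by simp [hz])
      · rw [hz]
        have h1 := hmem a (by simp)
        have h2 := hmem b (by simp)
        exact mul_mem (mul_mem h1 h2) (inv_mem h1)
      · rw [hz]
        exact hmem a (by simp)
      · exact hmem z (by simp [hz])
  | refl => rfl
  | symm _ _ _ ih => exact ih.symm
  | trans _ _ _ _ _ ih1 ih2 => exact ih1.trans ih2

omit [Finite G] in
theorem flat_rep (m k : ℕ) (g : G) :
    (List.replicate m (List.replicate k g)).flatten = List.replicate (k * m) g := by
  induction m with
  | zero => simp
  | succ m ih =>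
    rw [List.replicate_succ, List.flatten_cons, ih, ← List.replicate_add]
    congr 1
    ring

variable (c : Set G)

/-- The canonical list of elements of `c ∩ H`. -/
noncomputable def dlist (H : Subgroup G) : List G :=
  (Set.toFinite (c ∩ (H : Set G))).toFinset.toList

open Classical in
/-- A canonical element of `c ∩ H` (junk value `x₀` if empty). -/
noncomputable def gElem (x₀ : G) (H : Subgroup G) : G :=
  if h : (c ∩ (H : Set G)).Nonempty then h.choose else x₀

noncomputable def ccard : ℕ := (Set.toFinite c).toFinset.card

/-- The canonical stabilization suffix for the subgroup `H`. -/
noncomputable def suff (x₀ : G) (H : Subgroup G) : List G :=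
  ((dlist c H).map (fun t => List.replicate (Nat.card G) t)).flatten ++
    List.replicate (Nat.card G * (ccard c - (dlist c H).length)) (gElem c x₀ H)

theorem mem_dlist {H : Subgroup G} {t : G} : t ∈ dlist c H ↔ t ∈ c ∩ (H : Set G) := by
  simp [dlist, Finset.mem_toList, Set.Finite.mem_toFinset]

theorem dlist_length_le (H : Subgroup G) : (dlist c H).length ≤ ccard c := by
  rw [dlist, ccard, Finset.length_toList]
  apply Finset.card_le_card
  intro x hx
  simp only [Set.Finite.mem_toFinset] at hx ⊢
  exact hx.1

omit [Finite G] in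
theorem flatten_map_rep_length (L : List G) (k : ℕ) :
    ((L.map (fun t => List.replicate k t)).flatten).length = k * L.length := by
  induction L with
  | nil => simp
  | cons t L ih =>
    simp only [List.map_cons, List.flatten_cons, List.length_append, ih,
      List.length_replicate, List.length_cons]
    ring

theorem suff_length (x₀ : G) (H : Subgroup G) :
    (suff c x₀ H).length = Nat.card G * ccard c := by
  rw [suff, List.length_append, flatten_map_rep_length, List.length_replicate,
    ← Nat.mul_add, Nat.add_sub_cancel' (dlist_length_le c H)]

theorem gElem_mem {x₀ : G} (hx₀ : x₀ ∈ c) (H : Subgroup G) : gElem c x₀ H ∈ c := by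
  rw [gElem]
  split
  · next h => exact h.choose_spec.1
  · exact hx₀

theorem suff_mem_c {x₀ : G} (hx₀ : x₀ ∈ c) (H : Subgroup G) :
    ∀ x ∈ suff c x₀ H, x ∈ c := by
  intro x hx
  rw [suff, List.mem_append] at hx
  rcases hx with hx | hx
  · rw [List.mem_flatten] at hx
    obtain ⟨L, hL, hxL⟩ := hx
    rw [List.mem_map] at hL
    obtain ⟨t, ht, rfl⟩ := hL
    rw [List.mem_replicate] at hxL
    rw [hxL.2]
    exact ((mem_dlist c).mp ht).1
  · rw [List.mem_replicate] at hx
    rw [hx.2]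
    exact gElem_mem c hx₀ H

/-- Main list-level lemma: every sufficiently long tuple with entries in `c` is
braid-equivalent to one ending with a doubled stabilization suffix. -/
theorem main_surj {x₀ : G} (hx₀ : x₀ ∈ c)
    (hnonsplit : ∀ H : Subgroup G, (c ∩ (H : Set G)).Nonempty →
      ∀ x ∈ c ∩ (H : Set G), ∀ y ∈ c ∩ (H : Set G), ∃ h ∈ H, h * x * h⁻¹ = y)
    (l : List G) (hl : ∀ x ∈ l, x ∈ c)
    (hlen : Nat.card G * (Nat.card G * (2 * ccard c + 1)) < l.length) :
    ∃ y : List G,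
      LEq l ((y ++ suff c x₀ (Subgroup.closure {x | x ∈ l})) ++
        suff c x₀ (Subgroup.closure {x | x ∈ l})) := by
  classical
  set e := Nat.card G with he_def
  have he : 0 < e := Nat.card_pos
  set H := Subgroup.closure {x | x ∈ l} with hH_def
  set K := e * (2 * ccard c + 1) with hK_def
  obtain ⟨a, ha⟩ := exists_high_count l K hlen
  have hK0 : 0 < K := by
    have h1 : 0 < 2 * ccard c + 1 := by omega
    exact Nat.mul_pos he h1
  have haK : 0 < l.count a := lt_of_lt_of_le hK0 ha
  have hal : a ∈ l := by
    by_contra hm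
    rw [List.count_eq_zero_of_not_mem hm] at haK
    exact absurd haK (lt_irrefl 0)
  have hac : a ∈ c := hl a hal
  have haH : a ∈ H := Subgroup.subset_closure hal
  obtain ⟨y, hy⟩ := gather a K l ha
  -- entry set after gathering
  have hclos : Subgroup.closure {x | x ∈ y ++ List.replicate K a} = H := by
    rw [hH_def]
    exact (leq_closure_eq hy).symm
  set T : Set G := {x | x ∈ y} ∪ {a} with hT_def
  have hTset : {x | x ∈ y ++ List.replicate K a} = T := by
    ext z
    simp only [Set.mem_setOf_eq, List.mem_append, List.mem_replicate, hT_def,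
      Set.mem_union, Set.mem_singleton_iff]
    constructor
    · rintro (hz | ⟨-, rfl⟩)
      · exact Or.inl hz
      · exact Or.inr rfl
    · rintro (hz | rfl)
      · exact Or.inl hz
      · exact Or.inr ⟨by omega, rfl⟩
  have hclT : Subgroup.closure T = H := by rw [← hTset]; exact hclos
  -- the targets
  set g : G := gElem c x₀ H with hg_def
  set TS : List G := dlist c H ++ List.replicate (ccard c - (dlist c H).length) g ++
    (dlist c H ++ List.replicate (ccard c - (dlist c H).length) g) with hTS_def
  have hdne : (c ∩ (H : Set G)).Nonempty := ⟨a, hac, haH⟩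
  have hgH : g ∈ c ∩ (H : Set G) := by
    rw [hg_def, gElem, dif_pos hdne]
    exact hdne.choose_spec
  have hTS_mem : ∀ t ∈ TS, t ∈ c ∩ (H : Set G) := by
    intro t ht
    rw [hTS_def] at ht
    simp only [List.mem_append, List.mem_replicate] at ht
    rcases ht with (ht | ht) | (ht | ht)
    · exact (mem_dlist c).mp ht
    · rw [ht.2]; exact hgH
    · exact (mem_dlist c).mp ht
    · rw [ht.2]; exact hgH
  have hTS_len : TS.length = 2 * ccard c := by
    have hd := dlist_length_le c H
    rw [hTS_def]
    simp only [List.length_append, List.length_replicate]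
    omega
  -- reachability of all targets
  have hreach : ∀ t ∈ TS, Reach T a t := by
    intro t ht
    obtain ⟨h, hhH, hconj⟩ := hnonsplit H hdne a ⟨hac, haH⟩ t (hTS_mem t ht)
    have := reach_of_mem_closure (T := T) (a := a) (by rw [hclT]; exact hhH) Reach.base
    rwa [hconj] at this
  -- run the build
  set Y : List G := y ++ List.replicate e a with hY_def
  have hTY : T ⊆ {x | x ∈ Y} := by
    intro z hz
    rw [hT_def] at hz
    rcases hz with hz | hz
    · simp only [hY_def, Set.mem_setOf_eq, List.mem_append]
      exact Or.inl hz
    · rw [Set.mem_singleton_iff] at hz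
      show z ∈ Y
      rw [hY_def, List.mem_append, List.mem_replicate]
      exact Or.inr ⟨by omega, hz⟩
  have hbuild := build (T := T) (a := a) TS hreach Y hTY
  -- splitting the replicate
  have hsplit : List.replicate K a = List.replicate e a ++ List.replicate (e * TS.length) a := by
    rw [← List.replicate_add]
    congr 1
    rw [hK_def, hTS_len]
    ring
  -- flatten = suff ++ suff
  have hflat : (TS.map (fun t => List.replicate e t)).flatten =
      suff c x₀ H ++ suff c x₀ H := by
    rw [hTS_def, suff]
    simp only [List.map_append, List.flatten_append, List.map_replicate, flat_rep]
    rfl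
  refine ⟨Y, ?_⟩
  have step1 : LEq l (Y ++ List.replicate (e * TS.length) a) := by
    rw [hY_def, List.append_assoc, ← hsplit]
    exact hy
  have step2 : LEq (Y ++ List.replicate (e * TS.length) a)
      (Y ++ (suff c x₀ H ++ suff c x₀ H)) := by
    rw [← hflat]
    exact hbuild
  have := step1.trans step2
  rw [← List.append_assoc] at this
  exact this

omit [Finite G] in
theorem braidStep_to_lstep {r : ℕ} {v w : Fin r → G} (h : BraidStep v w) :
    LStep (List.ofFn v) (List.ofFn w) := by
  obtain ⟨i, hi, h1, h2, h3⟩ := h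
  have hir : i < r := Nat.lt_of_succ_lt hi
  have dv : List.ofFn v = (List.ofFn v).take i ++
      v ⟨i, hir⟩ :: v ⟨i + 1, hi⟩ :: (List.ofFn v).drop (i + 2) := by
    conv_lhs => rw [← List.take_append_drop i (List.ofFn v)]
    congr 1
    rw [List.drop_eq_getElem_cons (by simp; omega)]
    congr 1
    · simp [List.getElem_ofFn]
    rw [show i + 1 + 1 = i + 2 from rfl] at *
    rw [List.drop_eq_getElem_cons (h := by simp; omega) (i := i + 1)]
    congr 1
    simp [List.getElem_ofFn]
  have dw : List.ofFn w = (List.ofFn w).take i ++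
      (v ⟨i, hir⟩ * v ⟨i + 1, hi⟩ * (v ⟨i, hir⟩)⁻¹) :: v ⟨i, hir⟩ ::
        (List.ofFn w).drop (i + 2) := by
    conv_lhs => rw [← List.take_append_drop i (List.ofFn w)]
    congr 1
    rw [List.drop_eq_getElem_cons (by simp; omega)]
    congr 1
    · rw [List.getElem_ofFn]
      exact h1
    rw [List.drop_eq_getElem_cons (h := by simp; omega) (i := i + 1)]
    congr 1
    rw [List.getElem_ofFn]
    exact h2
  have htake : (List.ofFn w).take i = (List.ofFn v).take i := by
    apply List.ext_getElem (by simp)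
    intro n hn1 hn2
    have hn : n < i := by simp at hn1; omega
    rw [List.getElem_take, List.getElem_take, List.getElem_ofFn, List.getElem_ofFn]
    exact h3 ⟨n, by omega⟩ (by simp; omega) (by simp; omega)
  have hdrop : (List.ofFn w).drop (i + 2) = (List.ofFn v).drop (i + 2) := by
    apply List.ext_getElem (by simp)
    intro n hn1 hn2
    have hn : i + 2 + n < r := by simp at hn1; omega
    rw [List.getElem_drop, List.getElem_drop, List.getElem_ofFn, List.getElem_ofFn]
    exact h3 ⟨i + 2 + n, by omega⟩ (by simp; omega) (by simp; omega)
  refine ⟨(List.ofFn v).take i, v ⟨i, hir⟩, v ⟨i + 1, hi⟩, (List.ofFn v).drop (i + 2), dv, ?_⟩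
  rw [dw, htake, hdrop]

omit [Finite G] in
theorem cons_cons_getElem (x y : G) (s : List G) (k : ℕ) (hk : k < (x :: y :: s).length)
    (h2 : 2 ≤ k) : (x :: y :: s)[k] = s[k - 2]'(by simp at hk; omega) := by
  obtain ⟨m, rfl⟩ : ∃ m, k = m + 2 := ⟨k - 2, by omega⟩
  simp [List.getElem_cons_succ]

omit [Finite G] in
theorem lstep_to_braidStep {r : ℕ} {v w : Fin r → G}
    (h : LStep (List.ofFn v) (List.ofFn w)) : BraidStep v w := by
  obtain ⟨p, a, b, s, hv, hw⟩ := h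
  have hlen : r = p.length + s.length + 2 := by
    have := congrArg List.length hv
    simp at this
    omega
  have hi : p.length + 1 < r := by omega
  have hvget : ∀ (n : ℕ) (hn : n < r) (hb : n < (p ++ a :: b :: s).length),
      v ⟨n, hn⟩ = (p ++ a :: b :: s)[n] := by
    intro n hn hb
    have h1 := List.getElem_ofFn (f := v) (i := n) (by simpa)
    rw [← h1]
    exact List.getElem_of_eq hv _
  have hwget : ∀ (n : ℕ) (hn : n < r) (hb : n < (p ++ (a * b * a⁻¹) :: a :: s).length),
      w ⟨n, hn⟩ = (p ++ (a * b * a⁻¹) :: a :: s)[n] := by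
    intro n hn hb
    have h1 := List.getElem_ofFn (f := w) (i := n) (by simpa)
    rw [← h1]
    exact List.getElem_of_eq hw _
  have hva : v ⟨p.length, by omega⟩ = a := by
    rw [hvget p.length (by omega) (by simp), List.getElem_append_right (le_refl _)]
    simp
  have hvb : v ⟨p.length + 1, hi⟩ = b := by
    rw [hvget _ hi (by simp only [List.length_append, List.length_cons]; omega), List.getElem_append_right (by omega)]
    have h5 : p.length + 1 - p.length = 1 := by omega
    simp [h5]
  refine ⟨p.length, hi, ?_, ?_, ?_⟩
  · rw [hva, hvb, hwget _ (Nat.lt_of_succ_lt hi) (by simp),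
      List.getElem_append_right (le_refl _)]
    simp
  · rw [hva, hwget _ hi (by simp only [List.length_append, List.length_cons]; omega), List.getElem_append_right (by omega)]
    have h5 : p.length + 1 - p.length = 1 := by omega
    simp [h5]
  · intro j hj1 hj2
    have hjr : (j : ℕ) < r := j.isLt
    have hbv : (j : ℕ) < (p ++ a :: b :: s).length := by simp; omega
    have hbw : (j : ℕ) < (p ++ (a * b * a⁻¹) :: a :: s).length := by simp; omega
    have hjv : v j = (p ++ a :: b :: s)[(j : ℕ)] := by
      have := hvget (j : ℕ) hjr hbv
      simpa using this
    have hjw : w j = (p ++ (a * b * a⁻¹) :: a :: s)[(j : ℕ)] := by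
      have := hwget (j : ℕ) hjr hbw
      simpa using this
    rw [hjv, hjw]
    rcases Nat.lt_or_ge (j : ℕ) p.length with hlt | hge
    · rw [List.getElem_append_left hlt, List.getElem_append_left hlt]
    · have hge2 : 2 ≤ (j : ℕ) - p.length := by omega
      rw [List.getElem_append_right hge, List.getElem_append_right hge,
        cons_cons_getElem _ _ _ _ _ hge2, cons_cons_getElem _ _ _ _ _ hge2]

omit [Finite G] in
theorem braidEquiv_to_leq {r : ℕ} {v w : Fin r → G} (h : BraidEquiv v w) :
    LEq (List.ofFn v) (List.ofFn w) := by
  induction h with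
  | rel _ _ h => exact LEq.of_step (braidStep_to_lstep h)
  | refl => exact LEq.refl _
  | symm _ _ _ ih => exact ih.symm
  | trans _ _ _ _ _ ih1 ih2 => exact ih1.trans ih2

omit [Finite G] in
theorem leq_to_braidEquiv_aux : ∀ {l l' : List G}, LEq l l' →
    ∀ {r : ℕ} (v w : Fin r → G), List.ofFn v = l → List.ofFn w = l' → BraidEquiv v w := by
  intro l l' h
  induction h with
  | rel x y hxy =>
    intro r v w hv hw
    apply Relation.EqvGen.rel
    apply lstep_to_braidStep
    rw [hv, hw]
    exact hxy
  | refl x =>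
    intro r v w hv hw
    have : v = w := List.ofFn_injective (by rw [hv, hw])
    rw [this]
    exact Relation.EqvGen.refl w
  | symm x y _ ih =>
    intro r v w hv hw
    exact Relation.EqvGen.symm _ _ (ih w v hw hv)
  | trans x y z h1 h2 ih1 ih2 =>
    intro r v w hv hw
    have hylen : y.length = r := by
      have e1 : x.length = y.length := LEq.length_eq h1
      have e2 : x.length = r := by rw [← hv]; simp
      omega
    set u : Fin r → G := fun i => y[(i : ℕ)]'(by rw [hylen]; exact i.isLt) with hu
    have hofu : List.ofFn u = y := by
      subst hylen
      exact List.ofFn_getElem (xs := y)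
    exact Relation.EqvGen.trans _ _ _ (ih1 v u hv hofu) (ih2 u w hofu hw)

omit [Finite G] in
theorem leq_to_braidEquiv {r : ℕ} {v w : Fin r → G}
    (h : LEq (List.ofFn v) (List.ofFn w)) : BraidEquiv v w :=
  leq_to_braidEquiv_aux h v w rfl rfl

/-- Turn a list of known length into a tuple. -/
def tupleize (l : List G) {n : ℕ} (h : l.length = n) : Fin n → G :=
  fun i => l[(i : ℕ)]'(by rw [h]; exact i.isLt)

omit [Finite G] in
theorem ofFn_tupleize (l : List G) {n : ℕ} (h : l.length = n) :
    List.ofFn (tupleize l h) = l := by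
  subst h
  exact List.ofFn_getElem (xs := l)

theorem mem_suff_of_mem {x₀ : G} {H : Subgroup G} {t : G} (ht : t ∈ c ∩ (H : Set G)) :
    t ∈ suff c x₀ H := by
  rw [suff, List.mem_append]
  left
  rw [List.mem_flatten]
  refine ⟨List.replicate (Nat.card G) t, ?_, ?_⟩
  · rw [List.mem_map]
    exact ⟨t, (mem_dlist c).mpr ht, rfl⟩
  · rw [List.mem_replicate]
    refine ⟨?_, rfl⟩
    have := Nat.card_pos (α := G)
    omega

/-- The extension of a tuple by the stabilization suffix of its generated subgroup. -/
noncomputable def extList (x₀ : G) {r : ℕ} (v : {v : Fin r → G // ∀ i, v i ∈ c}) : List G :=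
  List.ofFn v.1 ++ suff c x₀ (Subgroup.closure {x | x ∈ List.ofFn v.1})

theorem extList_length (x₀ : G) {r : ℕ} (v : {v : Fin r → G // ∀ i, v i ∈ c}) :
    (extList c x₀ v).length = r + Nat.card G * ccard c := by
  rw [extList, List.length_append, suff_length, List.length_ofFn]

theorem extList_mem {x₀ : G} (hx₀ : x₀ ∈ c) {r : ℕ} (v : {v : Fin r → G // ∀ i, v i ∈ c}) :
    ∀ z ∈ extList c x₀ v, z ∈ c := by
  intro z hz
  rw [extList, List.mem_append] at hz
  rcases hz with hz | hz
  · rw [List.mem_ofFn] at hz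
    obtain ⟨j, rfl⟩ := hz
    exact v.2 j
  · exact suff_mem_c c hx₀ _ z hz

/-- The stabilization map on tuples. -/
noncomputable def FF {x₀ : G} (hx₀ : x₀ ∈ c) {r : ℕ}
    (v : {v : Fin r → G // ∀ i, v i ∈ c}) :
    {v : Fin (r + Nat.card G * ccard c) → G // ∀ i, v i ∈ c} :=
  ⟨tupleize (extList c x₀ v) (extList_length c x₀ v), fun i => by
    have h1 : tupleize (extList c x₀ v) (extList_length c x₀ v) i ∈ extList c x₀ v :=
      List.getElem_mem _
    exact extList_mem c hx₀ v _ h1⟩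

theorem FF_resp {x₀ : G} (hx₀ : x₀ ∈ c) {r : ℕ}
    {v w : {v : Fin r → G // ∀ i, v i ∈ c}} (h : BraidEquiv v.1 w.1) :
    BraidEquiv (FF c hx₀ v).1 (FF c hx₀ w).1 := by
  have hleq : LEq (List.ofFn v.1) (List.ofFn w.1) := braidEquiv_to_leq h
  have hH : Subgroup.closure {x | x ∈ List.ofFn v.1} =
      Subgroup.closure {x | x ∈ List.ofFn w.1} := leq_closure_eq hleq
  apply leq_to_braidEquiv
  rw [FF, FF, ofFn_tupleize, ofFn_tupleize, extList, extList, hH]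
  exact hleq.append_right _

theorem count_le {x₀ : G} (hx₀ : x₀ ∈ c)
    (hcclosed : ∀ g z : G, z ∈ c → g * z * g⁻¹ ∈ c)
    (hnonsplit : ∀ H : Subgroup G, (c ∩ (H : Set G)).Nonempty →
      ∀ x ∈ c ∩ (H : Set G), ∀ y ∈ c ∩ (H : Set G), ∃ h ∈ H, h * x * h⁻¹ = y)
    (r : ℕ) (hr : Nat.card G * (Nat.card G * (2 * ccard c + 1)) < r)
    (hru : Nat.card G * ccard c ≤ r) :
    numBraidOrbits G c (r + Nat.card G * ccard c) ≤ numBraidOrbits G c r := by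
  classical
  set u := Nat.card G * ccard c with hu_def
  let Q1 := Quot (fun v w : {v : Fin r → G // ∀ i, v i ∈ c} => BraidEquiv v.1 w.1)
  let Q2 := Quot (fun v w : {v : Fin (r + u) → G // ∀ i, v i ∈ c} => BraidEquiv v.1 w.1)
  have hresp : ∀ (a b : {v : Fin r → G // ∀ i, v i ∈ c}), BraidEquiv a.1 b.1 →
      (Quot.mk _ (FF c hx₀ a) : Q2) = Quot.mk _ (FF c hx₀ b) :=
    fun a b hab => Quot.sound (FF_resp c hx₀ hab)
  let φ : Q1 → Q2 := Quot.lift (fun v => Quot.mk _ (FF c hx₀ v)) hresp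
  have hsurj : Function.Surjective φ := by
    intro q
    induction q using Quot.ind with
    | _ w =>
      set l : List G := List.ofFn w.1 with hl_def
      have hlmem : ∀ z ∈ l, z ∈ c := by
        intro z hz
        rw [hl_def, List.mem_ofFn] at hz
        obtain ⟨j, rfl⟩ := hz
        exact w.2 j
      have hllen : l.length = r + u := by rw [hl_def]; simp
      have hlbig : Nat.card G * (Nat.card G * (2 * ccard c + 1)) < l.length := by
        rw [hllen]; omega
      obtain ⟨y, hy⟩ := main_surj c hx₀ hnonsplit l hlmem hlbig
      set H := Subgroup.closure {x | x ∈ l} with hH_def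
      set Lv := y ++ suff c x₀ H with hLv_def
      have hlenLv : Lv.length = r := by
        have h1 := hy.length_eq
        rw [hllen] at h1
        rw [List.length_append, suff_length] at h1
        simp only [← hu_def] at h1
        omega
      have hmemLv : ∀ z ∈ Lv, z ∈ c := by
        have h1 := (leq_mem_iff hcclosed hy).mp hlmem
        intro z hz
        exact h1 z (by rw [List.mem_append]; left; exact hz)
      have hclboth : Subgroup.closure {x | x ∈ Lv ++ suff c x₀ H} = H := by
        rw [hH_def]
        exact (leq_closure_eq hy).symm
      have hclLv : Subgroup.closure {x | x ∈ Lv} = H := by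
        apply le_antisymm
        · rw [Subgroup.closure_le]
          intro z hz
          have : z ∈ Subgroup.closure {x | x ∈ Lv ++ suff c x₀ H} :=
            Subgroup.subset_closure (by
              simp only [Set.mem_setOf_eq, List.mem_append]
              exact Or.inl hz)
          rw [hclboth] at this
          exact this
        · rw [hH_def, Subgroup.closure_le]
          intro z hz
          simp only [Set.mem_setOf_eq] at hz
          have hzc : z ∈ c := hlmem z hz
          have hzH : z ∈ H := by
            rw [hH_def]
            exact Subgroup.subset_closure hz
          have hzsuff : z ∈ suff c x₀ H := mem_suff_of_mem c ⟨hzc, hzH⟩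
          apply Subgroup.subset_closure
          simp only [Set.mem_setOf_eq, hLv_def, List.mem_append]
          exact Or.inr hzsuff
      set vv : {v : Fin r → G // ∀ i, v i ∈ c} :=
        ⟨tupleize Lv hlenLv, fun i => hmemLv _ (List.getElem_mem _)⟩ with hvv_def
      refine ⟨Quot.mk _ vv, ?_⟩
      show Quot.mk _ (FF c hx₀ vv) = Quot.mk _ w
      apply Quot.sound
      apply leq_to_braidEquiv
      have hofvv : List.ofFn vv.1 = Lv := ofFn_tupleize Lv hlenLv
      have hext : List.ofFn (FF c hx₀ vv).1 = Lv ++ suff c x₀ H := by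
        rw [FF, ofFn_tupleize, extList, hofvv, hclLv]
      rw [hext, hLv_def]
      have h9 := hy.symm
      rw [hl_def] at h9
      exact h9
  have : Nat.card Q2 ≤ Nat.card Q1 := Nat.card_le_card_of_surjective φ hsurj
  exact this

end EVWAux

/-- Ellenberg–Venkatesh–Westerland periodicity: if the generating conjugacy class `c`
satisfies the non-splitting property, then the number of braid orbits on `c^r` becomes
periodic as `r` gets suitably large. -/
theorem evw_periodicity {G : Type*} [Group G] [Finite G] (c : Set G)
    (hconj : ∃ x : G, c = {y | IsConj x y})
    (hgen : Subgroup.closure c = ⊤)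
    (hnonsplit : ∀ H : Subgroup G, (c ∩ (H : Set G)).Nonempty →
      ∀ x ∈ c ∩ (H : Set G), ∀ y ∈ c ∩ (H : Set G), ∃ h ∈ H, h * x * h⁻¹ = y) :
    ∃ u : ℕ, 0 < u ∧ ∃ R : ℕ, ∀ r : ℕ, R ≤ r →
      numBraidOrbits G c (r + u) = numBraidOrbits G c r := by
  classical
  obtain ⟨x₀, hc⟩ := hconj
  have hx₀ : x₀ ∈ c := by rw [hc]; exact IsConj.refl x₀
  have hcclosed : ∀ g z : G, z ∈ c → g * z * g⁻¹ ∈ c := by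
    intro g z hz
    rw [hc] at hz ⊢
    exact hz.trans (isConj_iff.mpr ⟨g, rfl⟩)
  set u := Nat.card G * EVWAux.ccard c with hu_def
  have hcc_pos : 0 < EVWAux.ccard c := by
    rw [EVWAux.ccard, Finset.card_pos]
    exact ⟨x₀, (Set.Finite.mem_toFinset _).mpr hx₀⟩
  have hu_pos : 0 < u := Nat.mul_pos Nat.card_pos hcc_pos
  refine ⟨u, hu_pos, ?_⟩
  set N : ℕ → ℕ := fun r => numBraidOrbits G c r with hN_def
  set R₁ : ℕ := Nat.card G * (Nat.card G * (2 * EVWAux.ccard c + 1)) + 1 + u with hR₁_def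
  have key : ∀ r : ℕ, R₁ ≤ r → N (r + u) ≤ N r := by
    intro r hr
    exact EVWAux.count_le c hx₀ hcclosed hnonsplit r (by omega) (by omega)
  set h : ℕ → ℕ := fun j => ∑ i ∈ Finset.range u, N (R₁ + (j * u + i)) with hh_def
  have hmono : ∀ j : ℕ, h (j + 1) ≤ h j := by
    intro j
    apply Finset.sum_le_sum
    intro i _
    have h1 : R₁ + ((j + 1) * u + i) = (R₁ + (j * u + i)) + u := by ring
    rw [h1]
    exact key _ (by omega)
  have hmono' : ∀ j k : ℕ, h (j + k) ≤ h j := by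
    intro j k
    induction k with
    | zero => exact le_refl _
    | succ k ih =>
      have : j + (k + 1) = (j + k) + 1 := by omega
      rw [this]
      exact le_trans (hmono (j + k)) ih
  have hne : (Set.range h).Nonempty := ⟨h 0, ⟨0, rfl⟩⟩
  obtain ⟨J, hJ⟩ := Nat.sInf_mem hne
  have hstab : ∀ j : ℕ, J ≤ j → h j = h J := by
    intro j hj
    have h1 : h j ≤ h J := by
      have := hmono' J (j - J)
      rwa [show J + (j - J) = j by omega] at this
    have h2 : sInf (Set.range h) ≤ h j := Nat.sInf_le ⟨j, rfl⟩
    omega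
  have termwise : ∀ j : ℕ, J ≤ j → ∀ i ∈ Finset.range u,
      N (R₁ + ((j + 1) * u + i)) = N (R₁ + (j * u + i)) := by
    intro j hj
    have hsum : ∑ i ∈ Finset.range u, N (R₁ + ((j + 1) * u + i)) =
        ∑ i ∈ Finset.range u, N (R₁ + (j * u + i)) := by
      have e1 := hstab (j + 1) (by omega)
      have e2 := hstab j hj
      rw [hh_def] at e1 e2
      simp only at e1 e2
      rw [e1, e2]
    have hle : ∀ i ∈ Finset.range u,
        N (R₁ + ((j + 1) * u + i)) ≤ N (R₁ + (j * u + i)) := by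
      intro i _
      have h1 : R₁ + ((j + 1) * u + i) = (R₁ + (j * u + i)) + u := by ring
      rw [h1]
      exact key _ (by omega)
    exact (Finset.sum_eq_sum_iff_of_le hle).mp hsum
  refine ⟨R₁ + J * u, ?_⟩
  intro r hr
  set n : ℕ := r - R₁ with hn_def
  have hnJ : J * u ≤ n := by omega
  have hmod : n % u < u := Nat.mod_lt _ hu_pos
  set j : ℕ := n / u with hj_def
  have hjJ : J ≤ j := by
    rw [hj_def]
    rw [Nat.le_div_iff_mul_le hu_pos]
    exact hnJ
  have hn_eq : n = j * u + n % u := by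
    rw [hj_def, Nat.mul_comm]
    exact (Nat.div_add_mod n u).symm
  have := termwise j hjJ (n % u) (Finset.mem_range.mpr hmod)
  have e1 : R₁ + ((j + 1) * u + n % u) = r + u := by
    have : (j + 1) * u + n % u = (j * u + n % u) + u := by ring
    omega
  have e2 : R₁ + (j * u + n % u) = r := by omega
  rw [e1, e2] at this
  exact this
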